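/- For every parameter tuple (h,j,k,0) with k ∈ {0,…,q_0−1}, j ∈ {0,…,q_0−1}, and max{1, m_{j,k,0}} ≤ h ≤ 2q_0, the integer n_{h,j,k,0} = hq − 2kq_0 − j belongs to the additive submonoid of ℕ generated by G_1. -/

import Mathlib

/-- `q₀ = 2^s`. -/
def q0 (s : ℕ) : ℕ := 2 ^ s

/-- `q = 2 q₀²`. -/
def qS (s : ℕ) : ℕ := 2 * q0 s ^ 2

/-- `m_{j,k,ℓ} = ⌈(q₀/(q₀−1))·(j + k + ℓ − (k+ℓ)/q)⌉`. -/
def mval (s j k l : ℕ) : ℤ :=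
  ⌈((q0 s : ℚ) / ((q0 s : ℚ) - 1)) *
    ((j : ℚ) + (k : ℚ) + (l : ℚ) - ((k : ℚ) + (l : ℚ)) / (qS s : ℚ))⌉

/-- `F₁ = { hq − (ℓ+2k)q₀ − j : ℓ ∈ {0,1}, k,j ∈ {0,…,q₀−1},
    h ∈ {max{1, m_{j,k,ℓ}},…,2q₀} }`. -/
def F1 (s : ℕ) : Set ℕ :=
  {n | ∃ h j k l : ℕ, l ≤ 1 ∧ k < q0 s ∧ j < q0 s ∧
    max 1 (mval s j k l) ≤ (h : ℤ) ∧ h ≤ 2 * q0 s ∧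
    n = h * qS s - (l + 2 * k) * q0 s - j}

/-- `F₂ = { hq − (2h−2q₀−1)q₀ − (q₀−1) : h ∈ {q₀+1,…,2q₀} }`. -/
def F2 (s : ℕ) : Set ℕ :=
  {n | ∃ h : ℕ, q0 s + 1 ≤ h ∧ h ≤ 2 * q0 s ∧
    n = h * qS s - (2 * h - 2 * q0 s - 1) * q0 s - (q0 s - 1)}

/-- `G₁ = { hq − kq₀ − ⌊(2h−k−2)/2⌋ : h ∈ {1,…,q₀}, k ∈ {0,…,2h−2} }`. -/
def G1 (s : ℕ) : Set ℕ :=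
  {n | ∃ h k : ℕ, 1 ≤ h ∧ h ≤ q0 s ∧ k ≤ 2 * h - 2 ∧
    n = h * qS s - k * q0 s - (2 * h - k - 2) / 2}

lemma q0_ge_two (s : ℕ) (hs : 1 ≤ s) : 2 ≤ q0 s := by
  have : (2:ℕ)^1 ≤ 2^s := Nat.pow_le_pow_right (by norm_num) hs
  simpa [q0] using this

lemma bound_aux (s : ℕ) (hs : 1 ≤ s) (h k j : ℕ) (hk : k ≤ h) (hj : j ≤ h) :
    2 * k * q0 s + j ≤ h * qS s := by
  have hQ := q0_ge_two s hs
  have hq : qS s = 2 * q0 s ^ 2 := rfl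
  rw [hq]
  have s1 : 2*k*q0 s ≤ 2*h*q0 s := Nat.mul_le_mul_right _ (by omega)
  have s2 : 2*h*q0 s*2 ≤ 2*h*q0 s*q0 s := Nat.mul_le_mul_left _ hQ
  have s3 : h*(2*q0 s^2) = 2*h*q0 s*q0 s := by ring
  have s4 : h ≤ h*(2*q0 s) := Nat.le_mul_of_pos_right h (by omega)
  have s5 : h*(2*q0 s) = 2*h*q0 s := by ring
  omega

lemma sum_split (X1 X2 Y1 Y2 Z1 Z2 : ℕ) (b1 : Y1 + Z1 ≤ X1) (b2 : Y2 + Z2 ≤ X2) :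
    (X1 + X2) - (Y1 + Y2) - (Z1 + Z2) = (X1 - Y1 - Z1) + (X2 - Y2 - Z2) := by omega

lemma key_lemma (s : ℕ) (hs : 1 ≤ s) : ∀ t h k j : ℕ, 1 ≤ t → h ≤ t * q0 s →
    h = k + j + t → h * qS s - 2 * k * q0 s - j ∈ AddSubmonoid.closure (G1 s) := by
  intro t
  induction t with
  | zero => intro h k j h1 _ _; exact absurd h1 (by norm_num)
  | succ t ih =>
    intro h k j _ hhle hsum
    have hQ2 : 2 ≤ q0 s := q0_ge_two s hs
    rcases Nat.eq_zero_or_pos t with ht0 | ht1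
    · subst ht0
      have hh1 : 1 ≤ h := by omega
      have hhq : h ≤ q0 s := by simpa using hhle
      apply AddSubmonoid.subset_closure
      refine ⟨h, 2*k, hh1, hhq, by omega, ?_⟩
      rw [show (2*h - 2*k - 2)/2 = j by omega]
    · -- step case
      have hmulE : (t+1) * q0 s = t * q0 s + q0 s := by ring
      have htq : t ≤ t * q0 s := Nat.le_mul_of_pos_right t (by omega)
      set h₁ := min (q0 s) (h - t) with hh₁
      set a₁ := min (h₁ - 1) k with ha₁
      set h₂ := h - h₁ with hh₂
      set k₂ := k - a₁ with hk₂
      set j₁ := h₁ - a₁ - 1 with hj₁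
      set j₂ := h₂ - k₂ - t with hj₂
      have f1 : 1 ≤ h₁ := by omega
      have f2 : h₁ ≤ q0 s := by omega
      have f3 : a₁ + 1 ≤ h₁ := by omega
      have f4 : h₂ ≤ t * q0 s := by omega
      have f5 : h₂ = k₂ + j₂ + t := by omega
      have f6 : h = h₁ + h₂ := by omega
      have f7 : k = a₁ + k₂ := by omega
      have f8 : j = j₁ + j₂ := by omega
      have hg : h₁ * qS s - 2*a₁ * q0 s - j₁ ∈ G1 s := by
        refine ⟨h₁, 2*a₁, f1, f2, by omega, ?_⟩
        rw [show (2*h₁ - 2*a₁ - 2)/2 = j₁ by omega]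
      have hmem := ih h₂ k₂ j₂ ht1 f4 f5
      have hsummem := AddSubmonoid.add_mem _ (AddSubmonoid.subset_closure hg) hmem
      have b1 : 2*a₁*q0 s + j₁ ≤ h₁ * qS s := bound_aux s hs h₁ a₁ j₁ (by omega) (by omega)
      have b2 : 2*k₂*q0 s + j₂ ≤ h₂ * qS s := bound_aux s hs h₂ k₂ j₂ (by omega) (by omega)
      have heq : h * qS s - 2*k*q0 s - j
          = (h₁ * qS s - 2*a₁*q0 s - j₁) + (h₂ * qS s - 2*k₂*q0 s - j₂) := by
        have e1 : h * qS s = h₁ * qS s + h₂ * qS s := by rw [f6, add_mul]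
        have e2 : 2*k*q0 s = 2*a₁*q0 s + 2*k₂*q0 s := by rw [f7]; ring
        rw [e1, e2, f8]
        exact sum_split _ _ _ _ _ _ b1 b2
      rw [heq]
      exact hsummem

/-- Every `n_{h,j,k,0} = hq − 2kq₀ − j ∈ F₁` belongs to `⟨G₁⟩`. -/
theorem stmt10 (s : ℕ) (hs : 1 ≤ s) (h j k : ℕ)
    (hk : k < q0 s) (hj : j < q0 s)
    (hhm : max 1 (mval s j k 0) ≤ (h : ℤ)) (hh : h ≤ 2 * q0 s) :
    h * qS s - 2 * k * q0 s - j ∈ AddSubmonoid.closure (G1 s) := by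
  have hQ2 : 2 ≤ q0 s := q0_ge_two s hs
  have hh1 : 1 ≤ h := by
    have h1 := le_trans (le_max_left 1 (mval s j k 0)) hhm
    exact_mod_cast h1
  have hmle : mval s j k 0 ≤ (h:ℤ) := le_trans (le_max_right _ _) hhm
  unfold mval at hmle
  have hx : ((q0 s : ℚ) / ((q0 s : ℚ) - 1)) *
      ((j : ℚ) + (k : ℚ) + ((0:ℕ) : ℚ) - ((k : ℚ) + ((0:ℕ) : ℚ)) / (qS s : ℚ)) ≤ ((h:ℤ):ℚ) :=
    Int.ceil_le.mp hmle
  have hQ2' : (2:ℚ) ≤ (q0 s : ℚ) := by exact_mod_cast hQ2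
  have hq' : (qS s : ℚ) = 2*(q0 s : ℚ)^2 := by unfold qS; push_cast; ring
  have hQ1 : (0:ℚ) < (q0 s : ℚ) - 1 := by linarith
  have hqpos : (0:ℚ) < (qS s:ℚ) := by rw [hq']; positivity
  push_cast at hx
  -- hx : q0/(q0-1) * (j + k - k/qS) ≤ h
  have hmul : (q0 s : ℚ) * ((j:ℚ) + (k:ℚ) + 0 - ((k:ℚ) + 0)/(qS s:ℚ)) ≤ (h:ℚ) * ((q0 s:ℚ)-1) := by
    have h2 := mul_le_mul_of_nonneg_right hx (le_of_lt hQ1)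
    have h3 : ((q0 s : ℚ) / ((q0 s : ℚ) - 1)) *
        ((j : ℚ) + (k : ℚ) + 0 - ((k : ℚ) + 0) / (qS s : ℚ)) * ((q0 s:ℚ)-1)
        = (q0 s : ℚ) * ((j:ℚ) + (k:ℚ) + 0 - ((k:ℚ) + 0)/(qS s:ℚ)) := by
      rw [mul_right_comm, div_mul_cancel₀ _ (ne_of_gt hQ1)]
    linarith [h2, h3.le, h3.symm.le]
  have hdiv : (q0 s : ℚ) * ((k:ℚ)/(qS s:ℚ)) < 1 := by
    rw [hq']
    have hkQ : (k:ℚ) < (q0 s : ℚ) := by exact_mod_cast hk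
    have hknn : (0:ℚ) ≤ (k:ℚ) := by positivity
    rw [div_eq_mul_inv, ← mul_assoc, mul_comm]
    rw [inv_mul_lt_iff₀ (by positivity)]
    nlinarith
  have hdivnn : (0:ℚ) ≤ (q0 s : ℚ) * ((k:ℚ)/(qS s:ℚ)) := by positivity
  have hexp : (q0 s : ℚ) * ((j:ℚ) + (k:ℚ) + 0 - ((k:ℚ) + 0)/(qS s:ℚ))
      = (q0 s : ℚ) * ((j:ℚ)+(k:ℚ)) - (q0 s : ℚ) * ((k:ℚ)/(qS s:ℚ)) := by ring
  have hfin : (q0 s : ℚ) * ((j:ℚ)+(k:ℚ)) + (h:ℚ) < (h:ℚ)*(q0 s : ℚ) + 1 := by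
    rw [hexp] at hmul
    linarith
  have hfinN : q0 s * (j + k) + h < h * q0 s + 1 := by exact_mod_cast hfin
  have hjk : j + k + 1 ≤ h := by
    by_contra hc
    push_neg at hc
    have hle : h ≤ j + k := by omega
    have h4 : h * q0 s ≤ (j+k) * q0 s := Nat.mul_le_mul_right _ hle
    have h5 : (j+k) * q0 s = q0 s * (j+k) := Nat.mul_comm _ _
    omega
  set t := h - (j + k) with htdef
  have ht1 : 1 ≤ t := by omega
  have hhtq : h ≤ t * q0 s := by
    have e : t * q0 s = h * q0 s - (j+k) * q0 s := by rw [Nat.sub_mul]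
    have h5 : (j+k) * q0 s = q0 s * (j+k) := Nat.mul_comm _ _
    omega
  exact key_lemma s hs t h k j ht1 hhtq (by omega)
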